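/- arXiv:1704.06314 — 2 statements merged into one kernel-verified Lean document; each statement's English description precedes it below -/
import Mathlib

section
/- There exists an absolute constant C > 0 such that for every γ > 0 there is n₀ ∈ ℕ with the following property: for all n ≥ n₀ and all reals ε with C·(log₂ n)/2^n ≤ ε ≤ 1/5, if g : {0,1}^n → {0,1} is a random function whose values g(x), x ∈ {0,1}^n, are independent and each equal to 1 with probability 3ε and 0 with probability 1 − 3ε, then Pr[g is ε-far from every (n−1)-junta] ≥ 1 − γ. -/
open Finset

/-- `f : {0,1}^n → {0,1}` is a `k`-junta: there is a set `S ⊆ [n]` with `|S| ≤ k`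
such that `f x = f y` whenever `x` and `y` agree on all coordinates in `S`. -/
def IsJunta (n k : ℕ) (f : (Fin n → Bool) → Bool) : Prop :=
  ∃ S : Finset (Fin n), S.card ≤ k ∧
    ∀ x y : Fin n → Bool, (∀ i ∈ S, x i = y i) → f x = f y

/-- `f` is `ε`-far from every `k`-junta. -/
def FarFromJuntas (n k : ℕ) (ε : ℝ) (f : (Fin n → Bool) → Bool) : Prop :=
  ∀ g : (Fin n → Bool) → Bool, IsJunta n k g →
    ε * 2 ^ n ≤ ((Finset.univ.filter (fun x => f x ≠ g x)).card : ℝ)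

noncomputable section
namespace S16
set_option linter.unusedSectionVars false

variable {α : Type*} [Fintype α] [DecidableEq α]

def ind (g : α → Bool) (x : α) : ℝ := if g x then 1 else 0

def J (s : Finset α) (g : α → Bool) : ℝ := ∏ x ∈ s, ind g x

def wt (p : ℝ) (g : α → Bool) : ℝ := ∏ x, (if g x then p else 1 - p)

lemma ind_nonneg (g : α → Bool) (x : α) : 0 ≤ ind g x := by
  unfold ind; split <;> norm_num

lemma ind_sq (g : α → Bool) (x : α) : ind g x * ind g x = ind g x := by
  unfold ind; split <;> norm_num

lemma J_sq (s : Finset α) (g : α → Bool) : J s g * J s g = J s g := by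
  unfold J; rw [← Finset.prod_mul_distrib]; exact Finset.prod_congr rfl fun x _ => ind_sq g x

lemma J_mul (s t : Finset α) (h : Disjoint s t) (g : α → Bool) :
    J s g * J t g = J (s ∪ t) g := (Finset.prod_union h).symm

lemma wt_nonneg {p : ℝ} (hp0 : 0 ≤ p) (hp1 : p ≤ 1) (g : α → Bool) : 0 ≤ wt p g :=
  Finset.prod_nonneg fun x _ => by split <;> linarith

lemma factor (F : α → Bool → ℝ) :
    ∑ g : α → Bool, ∏ x, F x (g x) = ∏ x, (F x true + F x false) := by
  rw [← Fintype.prod_sum F]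
  exact Finset.prod_congr rfl fun x _ => by rw [Fintype.sum_bool]

lemma key (p : ℝ) (s : Finset α) :
    ∑ g : α → Bool, wt p g * J s g = p ^ s.card := by
  have h1 : ∀ g : α → Bool, wt p g * J s g
      = ∏ x, ((if g x then p else 1 - p) * (if x ∈ s then (if g x then (1:ℝ) else 0) else 1)) := by
    intro g
    rw [Finset.prod_mul_distrib, Fintype.prod_ite_mem s]
    rfl
  rw [Finset.sum_congr rfl fun g _ => h1 g,
    factor (fun x b => (if b then p else 1 - p) * (if x ∈ s then (if b then (1:ℝ) else 0) else 1))]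
  have h2 : ∀ x : α, ((if (true:Bool) then p else 1 - p) *
        (if x ∈ s then (if (true:Bool) then (1:ℝ) else 0) else 1)
      + (if (false:Bool) then p else 1 - p) *
        (if x ∈ s then (if (false:Bool) then (1:ℝ) else 0) else 1))
      = (if x ∈ s then p else 1) := by
    intro x; simp only [if_true, if_false, Bool.false_eq_true]; split <;> ring
  rw [Finset.prod_congr rfl fun x _ => h2 x, Fintype.prod_ite_mem s, Finset.prod_const]

lemma sum_wt (p : ℝ) : ∑ g : α → Bool, wt p g = 1 := by
  have := key (α := α) p ∅
  simpa [J] using this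

end S16

section Moments
variable {α : Type*} [Fintype α] [DecidableEq α] {β : Type*} [DecidableEq β]

namespace S16

lemma E_lin (p : ℝ) (P : Finset β) (T : β → Finset α) (k : ℕ)
    (hcard : ∀ b ∈ P, (T b).card = k) :
    ∑ g : α → Bool, wt p g * (∑ b ∈ P, J (T b) g) = P.card * p ^ k := by
  simp only [Finset.mul_sum]
  rw [Finset.sum_comm]
  have : ∀ b ∈ P, ∑ g : α → Bool, wt p g * J (T b) g = p ^ k := by
    intro b hb; rw [key, hcard b hb]
  rw [Finset.sum_congr rfl this, Finset.sum_const, nsmul_eq_mul]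

lemma E_sq (p : ℝ) (P : Finset β) (T : β → Finset α) (k : ℕ)
    (hcard : ∀ b ∈ P, (T b).card = k)
    (hdisj : ∀ b ∈ P, ∀ c ∈ P, b ≠ c → Disjoint (T b) (T c)) :
    ∑ g : α → Bool, wt p g * (∑ b ∈ P, J (T b) g) ^ 2
      = P.card * p ^ k + (P.card * (P.card - 1)) * (p ^ k) ^ 2 := by
  have hJJ : ∀ g : α → Bool, ∀ b ∈ P, ∀ c ∈ P,
      J (T b) g * J (T c) g = if b = c then J (T b) g else J (T b ∪ T c) g := by
    intro g b hb c hc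
    split
    · next h => subst h; exact J_sq _ _
    · next h => exact J_mul _ _ (hdisj b hb c hc h) g
  have hE : ∀ b ∈ P, ∀ c ∈ P, ∑ g : α → Bool, wt p g * (J (T b) g * J (T c) g)
      = if b = c then p ^ k else (p ^ k) ^ 2 := by
    intro b hb c hc
    rw [Finset.sum_congr rfl fun g _ => by rw [hJJ g b hb c hc]]
    split
    · next h => rw [key, hcard b hb]
    · next h =>
        rw [key, Finset.card_union_of_disjoint (hdisj b hb c hc h), hcard b hb, hcard c hc,
          ]
        ring
  have expand : ∀ g : α → Bool, wt p g * (∑ b ∈ P, J (T b) g) ^ 2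
      = ∑ b ∈ P, ∑ c ∈ P, wt p g * (J (T b) g * J (T c) g) := by
    intro g
    rw [sq, Finset.sum_mul_sum]
    simp only [Finset.mul_sum]
  rw [Finset.sum_congr rfl fun g _ => expand g, Finset.sum_comm]
  rw [Finset.sum_congr rfl fun b _ => Finset.sum_comm]
  have inner : ∀ b ∈ P, ∑ c ∈ P, ∑ g : α → Bool, wt p g * (J (T b) g * J (T c) g)
      = P.card * (p ^ k) ^ 2 + (p ^ k - (p ^ k) ^ 2) := by
    intro b hb
    rw [Finset.sum_congr rfl (fun c hc => hE b hb c hc)]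
    have : ∀ c ∈ P, (if b = c then p ^ k else (p ^ k) ^ 2)
        = (p ^ k) ^ 2 + (if c = b then p ^ k - (p ^ k) ^ 2 else 0) := by
      intro c hc; rcases eq_or_ne b c with h | h
      · subst h; simp
      · rw [if_neg h, if_neg (Ne.symm h)]; ring
    rw [Finset.sum_congr rfl this, Finset.sum_add_distrib, Finset.sum_const, nsmul_eq_mul,
      Finset.sum_ite_eq' P b (fun _ => p ^ k - (p ^ k) ^ 2), if_pos hb]
  rw [Finset.sum_congr rfl inner, Finset.sum_const, nsmul_eq_mul]
  ring

lemma var_le (p : ℝ) (hp0 : 0 ≤ p) (hp1 : p ≤ 1) (P : Finset β) (T : β → Finset α) (k : ℕ)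
    (hcard : ∀ b ∈ P, (T b).card = k)
    (hdisj : ∀ b ∈ P, ∀ c ∈ P, b ≠ c → Disjoint (T b) (T c)) :
    ∑ g : α → Bool, wt p g * (∑ b ∈ P, J (T b) g - P.card * p ^ k) ^ 2
      ≤ P.card * p ^ k := by
  have expand : ∀ g : α → Bool,
      wt p g * (∑ b ∈ P, J (T b) g - P.card * p ^ k) ^ 2
      = wt p g * (∑ b ∈ P, J (T b) g) ^ 2
        - 2 * (P.card * p ^ k) * (wt p g * (∑ b ∈ P, J (T b) g))
        + (P.card * p ^ k) ^ 2 * wt p g := by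
    intro g; ring
  rw [Finset.sum_congr rfl fun g _ => expand g, Finset.sum_add_distrib,
    Finset.sum_sub_distrib, ← Finset.mul_sum, ← Finset.mul_sum,
    E_sq p P T k hcard hdisj, E_lin p P T k hcard, sum_wt]
  have hpk0 : 0 ≤ p ^ k := pow_nonneg hp0 k
  have hpk1 : p ^ k ≤ 1 := pow_le_one₀ hp0 hp1
  have hP : (0:ℝ) ≤ P.card := Nat.cast_nonneg _
  nlinarith [mul_nonneg hP (mul_nonneg hpk0 (sub_nonneg.2 hpk1))]

lemma chebyshev (p : ℝ) (hp0 : 0 ≤ p) (hp1 : p ≤ 1) (P : Finset β) (T : β → Finset α) (k : ℕ)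
    (hcard : ∀ b ∈ P, (T b).card = k)
    (hdisj : ∀ b ∈ P, ∀ c ∈ P, b ≠ c → Disjoint (T b) (T c))
    (t : ℝ) (ht : 0 < t) (E : (α → Bool) → Prop) [DecidablePred E]
    (hE : ∀ g, E g → t ≤ |∑ b ∈ P, J (T b) g - P.card * p ^ k|) :
    ∑ g : α → Bool, wt p g * (if E g then (1:ℝ) else 0) ≤ P.card * p ^ k / t ^ 2 := by
  have h1 : ∀ g : α → Bool, wt p g * (if E g then (1:ℝ) else 0)
      ≤ wt p g * (∑ b ∈ P, J (T b) g - P.card * p ^ k) ^ 2 / t ^ 2 := by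
    intro g
    have hw := wt_nonneg hp0 hp1 g
    split
    · next h =>
        have h2 : t ^ 2 ≤ (∑ b ∈ P, J (T b) g - P.card * p ^ k) ^ 2 := by
          have := hE g h
          calc t ^ 2 ≤ |∑ b ∈ P, J (T b) g - P.card * p ^ k| ^ 2 :=
                pow_le_pow_left₀ ht.le this 2
            _ = _ := sq_abs _
        rw [mul_one]
        calc wt p g = wt p g * 1 := (mul_one _).symm
          _ ≤ wt p g * ((∑ b ∈ P, J (T b) g - P.card * p ^ k) ^ 2 / t ^ 2) := by
              apply mul_le_mul_of_nonneg_left _ hw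
              rw [le_div_iff₀ (by positivity), one_mul]; exact h2
          _ = _ := by ring
    · next h => rw [mul_zero]; positivity
  calc ∑ g : α → Bool, wt p g * (if E g then (1:ℝ) else 0)
      ≤ ∑ g : α → Bool, wt p g * (∑ b ∈ P, J (T b) g - P.card * p ^ k) ^ 2 / t ^ 2 :=
        Finset.sum_le_sum fun g _ => h1 g
    _ = (∑ g : α → Bool, wt p g * (∑ b ∈ P, J (T b) g - P.card * p ^ k) ^ 2) / t ^ 2 := by
        rw [Finset.sum_div]
    _ ≤ P.card * p ^ k / t ^ 2 := by
        apply div_le_div_of_nonneg_right (var_le p hp0 hp1 P T k hcard hdisj) (by positivity)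

end S16
end Moments

section Cube
namespace S16
open Classical

variable {n : ℕ}

def flp (i : Fin n) (x : Fin n → Bool) : Fin n → Bool := Function.update x i (!(x i))

lemma flp_self (i : Fin n) (x : Fin n → Bool) : flp i x i = !(x i) :=
  Function.update_self i _ x

lemma flp_ne {i j : Fin n} (h : j ≠ i) (x : Fin n → Bool) : flp i x j = x j :=
  Function.update_of_ne h _ x

lemma flp_flp (i : Fin n) (x : Fin n → Bool) : flp i (flp i x) = x := by
  funext j
  rcases eq_or_ne j i with rfl | h
  · rw [flp_self, flp_self, Bool.not_not]
  · rw [flp_ne h, flp_ne h]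

lemma flp_neq (i : Fin n) (x : Fin n → Bool) : flp i x ≠ x := by
  intro h
  have := congrFun h i
  rw [flp_self] at this
  exact (Bool.not_ne_self (x i)) this

def Pi (i : Fin n) : Finset (Fin n → Bool) := Finset.univ.filter (fun x => x i = false)

lemma mem_Pi {i : Fin n} {x : Fin n → Bool} : x ∈ Pi i ↔ x i = false := by
  simp [Pi]

lemma flp_mem_compl {i : Fin n} {x : Fin n → Bool} (hx : x ∈ Pi i) : flp i x ∈ (Pi i)ᶜ := by
  rw [Finset.mem_compl, mem_Pi, flp_self, mem_Pi.1 hx]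
  simp

lemma card_Pi (i : Fin n) : 2 * (Pi i).card = 2 ^ n := by
  have hbij : (Pi i).card = (Pi i)ᶜ.card := by
    apply Finset.card_bij (fun x _ => flp i x)
    · intro x hx; exact flp_mem_compl hx
    · intro x hx y hy hxy
      have := congrArg (flp i) hxy
      rwa [flp_flp, flp_flp] at this
    · intro y hy
      refine ⟨flp i y, ?_, flp_flp i y⟩
      rw [Finset.mem_compl, mem_Pi] at hy
      rw [mem_Pi, flp_self]
      simp at hy
      simp [hy]
  have h2 := Finset.card_add_card_compl (Pi i)
  have hcard : Fintype.card (Fin n → Bool) = 2 ^ n := by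
    rw [Fintype.card_fun, Fintype.card_bool, Fintype.card_fin]
  omega

lemma card_Pi_real (i : Fin n) : ((Pi i).card : ℝ) = 2 ^ n / 2 := by
  have := card_Pi i
  have : (2 * (Pi i).card : ℝ) = 2 ^ n := by exact_mod_cast congrArg (Nat.cast : ℕ → ℝ) this
  linarith

def XX (g : (Fin n → Bool) → Bool) : ℝ := ∑ x : Fin n → Bool, J {x} g

def YY (i : Fin n) (g : (Fin n → Bool) → Bool) : ℝ := ∑ x ∈ Pi i, J {x, flp i x} g

lemma XX_eq (g : (Fin n → Bool) → Bool) : XX g = ∑ x : Fin n → Bool, ind g x :=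
  Finset.sum_congr rfl fun x _ =>
    show ∏ y ∈ ({x} : Finset (Fin n → Bool)), ind g y = _ from Finset.prod_singleton _ _

lemma YY_eq (i : Fin n) (g : (Fin n → Bool) → Bool) :
    YY i g = ∑ x ∈ Pi i, ind g x * ind g (flp i x) :=
  Finset.sum_congr rfl fun x _ =>
    show ∏ y ∈ ({x, flp i x} : Finset (Fin n → Bool)), ind g y = _ from
      Finset.prod_pair (Ne.symm (flp_neq i x))

lemma XX_split (i : Fin n) (g : (Fin n → Bool) → Bool) :
    XX g = ∑ x ∈ Pi i, (ind g x + ind g (flp i x)) := by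
  rw [XX_eq, ← Finset.sum_add_sum_compl (Pi i) (ind g), Finset.sum_add_distrib]
  congr 1
  apply Finset.sum_bij' (fun x _ => flp i x) (fun x _ => flp i x)
  · intro x hx
    rw [Finset.mem_compl, mem_Pi] at hx
    rw [mem_Pi, flp_self]
    simp only [Bool.not_eq_false] at hx
    simp [hx]
  · intro x hx; exact flp_mem_compl hx
  · intro x _; exact flp_flp i x
  · intro x _; exact flp_flp i x
  · intro x _; rw [flp_flp]

lemma D_eq (i : Fin n) (g : (Fin n → Bool) → Bool) :
    ((Finset.univ.filter (fun x => x i = false ∧ g x ≠ g (flp i x))).card : ℝ)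
      = XX g - 2 * YY i g := by
  have h1 : (Finset.univ.filter (fun x : Fin n → Bool => x i = false ∧ g x ≠ g (flp i x)))
      = (Pi i).filter (fun x => g x ≠ g (flp i x)) := by
    rw [Pi, Finset.filter_filter]
  rw [h1, XX_split i g, YY_eq, Finset.mul_sum, ← Finset.sum_sub_distrib,
    Finset.card_filter]
  push_cast
  apply Finset.sum_congr rfl
  intro x _
  rcases hgx : g x <;> rcases hgf : g (flp i x) <;> simp [ind, hgx, hgf] <;> norm_num

end S16
end Cube

section Det
namespace S16
open Classical

variable {n : ℕ}

lemma D_le_dist (i : Fin n) (g h : (Fin n → Bool) → Bool)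
    (hS : ∃ S : Finset (Fin n), i ∉ S ∧
      ∀ x y : Fin n → Bool, (∀ j ∈ S, x j = y j) → h x = h y) :
    (Finset.univ.filter (fun x => x i = false ∧ g x ≠ g (flp i x))).card
      ≤ (Finset.univ.filter (fun x => g x ≠ h x)).card := by
  obtain ⟨S, hiS, hprop⟩ := hS
  have hagree : ∀ x : Fin n → Bool, h x = h (flp i x) := by
    intro x
    apply hprop
    intro j hj
    exact (flp_ne (fun hji => hiS (by rwa [hji] at hj)) x).symm
  apply Finset.card_le_card_of_injOn (fun x => if g x = h x then flp i x else x)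
  · intro x hx
    simp only [Finset.coe_filter, Finset.mem_coe, Finset.mem_filter, Finset.mem_univ, true_and, Set.mem_setOf_eq] at hx ⊢
    obtain ⟨hxi, hgg⟩ := hx
    split
    · next heq =>
        intro hcon
        exact hgg (by rw [heq, hagree x, hcon])
    · next hne => exact hne
  · intro x hx y hy hxy
    simp only [Finset.mem_coe, Finset.mem_filter, Finset.mem_univ, true_and] at hx hy
    simp only at hxy
    split at hxy <;> split at hxy
    · have := congrArg (flp i) hxy
      rwa [flp_flp, flp_flp] at this
    · exfalso
      have := congrArg (fun z : Fin n → Bool => z i) hxy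
      simp only [flp_self, hx.1, hy.1] at this
      exact Bool.false_ne_true this.symm
    · exfalso
      have := congrArg (fun z : Fin n → Bool => z i) hxy
      simp only [flp_self, hx.1, hy.1] at this
      exact Bool.false_ne_true this
    · exact hxy

lemma good_far (hn : 1 ≤ n) (ε : ℝ) (hε0 : 0 ≤ ε) (hε5 : ε ≤ 1/5)
    (g : (Fin n → Bool) → Bool)
    (hX : (29/10) * ε * 2 ^ n ≤ XX g)
    (hY : ∀ i : Fin n, YY i g ≤ ((Pi i).card : ℝ) * (3*ε)^2 + ε * 2 ^ n / 20) :
    FarFromJuntas n (n-1) ε g := by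
  intro h ⟨S, hScard, hSprop⟩
  have hSne : S ≠ Finset.univ := by
    intro hcon
    rw [hcon, Finset.card_univ, Fintype.card_fin] at hScard
    omega
  obtain ⟨i, _, hiS⟩ := Finset.exists_of_ssubset (Finset.ssubset_univ_iff.2 hSne)
  have hD := D_le_dist i g h ⟨S, hiS, hSprop⟩
  have hDr : (ε : ℝ) * 2 ^ n ≤
      ((Finset.univ.filter (fun x => x i = false ∧ g x ≠ g (flp i x))).card : ℝ) := by
    rw [D_eq]
    have hYi := hY i
    rw [card_Pi_real] at hYi
    have hN : (0:ℝ) < 2 ^ n := by positivity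
    nlinarith [mul_nonneg (mul_nonneg hε0 (sub_nonneg.2 hε5)) hN.le]
  calc ε * 2 ^ n ≤ _ := hDr
    _ ≤ _ := by exact_mod_cast hD

end S16
end Det

section Prob
namespace S16
open Classical

lemma prob_bound (n : ℕ) (hn : 1 ≤ n) (ε : ℝ) (hε0 : 0 < ε) (hε5 : ε ≤ 1/5) :
    1 - (300 / (ε * 2 ^ n) + n * (1800 / 2 ^ n))
      ≤ ∑ g : (Fin n → Bool) → Bool,
          (if FarFromJuntas n (n-1) ε g then (1:ℝ) else 0) * wt (3*ε) g := by
  have hp0 : 0 ≤ 3 * ε := by positivity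
  have hp1 : 3 * ε ≤ 1 := by linarith
  have hN : (0:ℝ) < 2 ^ n := by positivity
  have hεN : (0:ℝ) < ε * 2 ^ n := by positivity
  have hcardU : (((Finset.univ : Finset (Fin n → Bool))).card : ℝ) = 2 ^ n := by
    rw [Finset.card_univ, Fintype.card_fun, Fintype.card_bool, Fintype.card_fin]
    push_cast; ring
  -- Chebyshev for X
  have chebX : ∑ g : (Fin n → Bool) → Bool,
      wt (3*ε) g * (if XX g < (29/10) * ε * 2 ^ n then (1:ℝ) else 0)
      ≤ 300 / (ε * 2 ^ n) := by
    have h := chebyshev (α := Fin n → Bool) (β := Fin n → Bool) (3*ε) hp0 hp1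
      Finset.univ (fun x => {x}) 1 (by simp) (by intro b _ c _ h; simpa using h)
      (ε * 2 ^ n / 10) (by positivity)
      (fun g => XX g < (29/10) * ε * 2 ^ n) ?_
    · refine h.trans ?_
      rw [hcardU, pow_one]
      rw [show (2:ℝ) ^ n * (3 * ε) / (ε * 2 ^ n / 10) ^ 2 = 300 / (ε * 2 ^ n) by
        field_simp; ring]
    · intro g hg
      have hXg : ∑ b ∈ Finset.univ, J {b} g = XX g := rfl
      rw [hXg, hcardU, pow_one]
      refine le_abs.2 (Or.inr ?_)
      linarith
  -- Chebyshev for each Y i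
  have chebY : ∀ i : Fin n, ∑ g : (Fin n → Bool) → Bool,
      wt (3*ε) g * (if ((Pi i).card : ℝ) * (3*ε) ^ 2 + ε * 2 ^ n / 20 < YY i g
        then (1:ℝ) else 0)
      ≤ 1800 / 2 ^ n := by
    intro i
    have hdisj2 : ∀ x ∈ Pi i, ∀ y ∈ Pi i, x ≠ y →
        Disjoint ({x, flp i x} : Finset (Fin n → Bool)) {y, flp i y} := by
      intro x hx y hy hxy
      rw [Finset.disjoint_left]
      intro a ha hb
      simp only [Finset.mem_insert, Finset.mem_singleton] at ha hb
      have hxi := mem_Pi.1 hx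
      have hyi := mem_Pi.1 hy
      rcases ha with rfl | rfl <;> rcases hb with h | h
      all_goals first
        | exact hxy h
        | exact hxy (by have h2 := congrArg (flp i) h; rwa [flp_flp, flp_flp] at h2)
        | (exfalso
           have h2 := congrArg (fun z : Fin n → Bool => z i) h
           simp only [flp_self] at h2
           simp_all)
    have h := chebyshev (α := Fin n → Bool) (β := Fin n → Bool) (3*ε) hp0 hp1
      (Pi i) (fun x => {x, flp i x}) 2
      (fun x _ => Finset.card_pair (Ne.symm (flp_neq i x))) hdisj2
      (ε * 2 ^ n / 20) (by positivity)
      (fun g => ((Pi i).card : ℝ) * (3*ε) ^ 2 + ε * 2 ^ n / 20 < YY i g) ?_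
    · refine h.trans ?_
      rw [card_Pi_real]
      rw [show (2:ℝ) ^ n / 2 * (3 * ε) ^ 2 / (ε * 2 ^ n / 20) ^ 2 = 1800 / 2 ^ n by
        field_simp; ring]
    · intro g hg
      have hYg : ∑ b ∈ Pi i, J {b, flp i b} g = YY i g := rfl
      rw [hYg]
      exact le_abs.2 (Or.inl (by linarith))
  -- Union bound
  set Good : ((Fin n → Bool) → Bool) → Prop := fun g =>
    ((29/10) * ε * 2 ^ n ≤ XX g) ∧
    ∀ i : Fin n, YY i g ≤ ((Pi i).card : ℝ) * (3*ε) ^ 2 + ε * 2 ^ n / 20 with hGood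
  have union : ∀ g : (Fin n → Bool) → Bool,
      (if ¬ Good g then (1:ℝ) else 0) ≤
        (if XX g < (29/10) * ε * 2 ^ n then (1:ℝ) else 0)
        + ∑ i : Fin n, (if ((Pi i).card : ℝ) * (3*ε) ^ 2 + ε * 2 ^ n / 20 < YY i g
            then (1:ℝ) else 0) := by
    intro g
    have hsum0 : (0:ℝ) ≤ ∑ i : Fin n,
        (if ((Pi i).card : ℝ) * (3*ε) ^ 2 + ε * 2 ^ n / 20 < YY i g then (1:ℝ) else 0) :=
      Finset.sum_nonneg fun i _ => by split <;> norm_num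
    split
    · next hng =>
      rw [hGood, not_and_or] at hng
      rcases hng with hbx | hby
      · rw [not_le] at hbx
        rw [if_pos hbx]
        linarith
      · push_neg at hby
        obtain ⟨i, hi⟩ := hby
        have hone : (1:ℝ) ≤ ∑ i : Fin n,
            (if ((Pi i).card : ℝ) * (3*ε) ^ 2 + ε * 2 ^ n / 20 < YY i g then (1:ℝ) else 0) := by
          have h0 := Finset.single_le_sum
            (f := fun j : Fin n => if ((Pi j).card : ℝ) * (3*ε) ^ 2 + ε * 2 ^ n / 20 < YY j g
              then (1:ℝ) else 0)
            (fun j _ => by split <;> norm_num) (Finset.mem_univ i)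
          rwa [if_pos hi] at h0
        have : (0:ℝ) ≤ if XX g < (29/10) * ε * 2 ^ n then (1:ℝ) else 0 := by
          split <;> norm_num
        linarith
    · next =>
      have : (0:ℝ) ≤ if XX g < (29/10) * ε * 2 ^ n then (1:ℝ) else 0 := by
        split <;> norm_num
      linarith
  have badBound : ∑ g : (Fin n → Bool) → Bool, wt (3*ε) g * (if ¬ Good g then (1:ℝ) else 0)
      ≤ 300 / (ε * 2 ^ n) + n * (1800 / 2 ^ n) := by
    have step1 : ∑ g : (Fin n → Bool) → Bool, wt (3*ε) g * (if ¬ Good g then (1:ℝ) else 0)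
        ≤ ∑ g : (Fin n → Bool) → Bool, (wt (3*ε) g * (if XX g < (29/10) * ε * 2 ^ n then (1:ℝ) else 0)
          + ∑ i : Fin n, wt (3*ε) g * (if ((Pi i).card : ℝ) * (3*ε) ^ 2 + ε * 2 ^ n / 20 < YY i g
              then (1:ℝ) else 0)) := by
      apply Finset.sum_le_sum
      intro g _
      have hw := wt_nonneg hp0 hp1 g
      rw [← Finset.mul_sum, ← mul_add]
      exact mul_le_mul_of_nonneg_left (union g) hw
    rw [Finset.sum_add_distrib, Finset.sum_comm] at step1
    have step2 : ∑ i : Fin n, ∑ g : (Fin n → Bool) → Bool,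
        wt (3*ε) g * (if ((Pi i).card : ℝ) * (3*ε) ^ 2 + ε * 2 ^ n / 20 < YY i g
          then (1:ℝ) else 0) ≤ ∑ i : Fin n, (1800 / 2 ^ n : ℝ) :=
      Finset.sum_le_sum fun i _ => chebY i
    rw [Finset.sum_const, Finset.card_univ, Fintype.card_fin, nsmul_eq_mul] at step2
    linarith
  -- from Good to Far
  have goodFar : ∀ g : (Fin n → Bool) → Bool, Good g → FarFromJuntas n (n-1) ε g := by
    intro g hg
    exact good_far hn ε hε0.le hε5 g hg.1 hg.2
  have mono : ∀ g : (Fin n → Bool) → Bool,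
      (if Good g then (1:ℝ) else 0) * wt (3*ε) g
        ≤ (if FarFromJuntas n (n-1) ε g then (1:ℝ) else 0) * wt (3*ε) g := by
    intro g
    have hw := wt_nonneg hp0 hp1 g
    by_cases hg : Good g
    · rw [if_pos hg, if_pos (goodFar g hg)]
    · rw [if_neg hg, zero_mul]
      positivity
  have split : ∑ g : (Fin n → Bool) → Bool, (if Good g then (1:ℝ) else 0) * wt (3*ε) g
      = 1 - ∑ g : (Fin n → Bool) → Bool, wt (3*ε) g * (if ¬ Good g then (1:ℝ) else 0) := by
    have hpt : ∀ g : (Fin n → Bool) → Bool,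
        (if Good g then (1:ℝ) else 0) * wt (3*ε) g
          = wt (3*ε) g - wt (3*ε) g * (if ¬ Good g then (1:ℝ) else 0) := by
      intro g
      by_cases hg : Good g
      · rw [if_pos hg, if_neg (by simpa using hg), mul_zero, one_mul]; ring
      · rw [if_neg hg, if_pos hg, mul_one, zero_mul]; ring
    rw [Finset.sum_congr rfl fun g _ => hpt g, Finset.sum_sub_distrib,
      sum_wt (α := Fin n → Bool) (3*ε)]
  calc 1 - (300 / (ε * 2 ^ n) + n * (1800 / 2 ^ n))
      ≤ 1 - ∑ g : (Fin n → Bool) → Bool, wt (3*ε) g * (if ¬ Good g then (1:ℝ) else 0) := by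
        linarith
    _ = ∑ g : (Fin n → Bool) → Bool, (if Good g then (1:ℝ) else 0) * wt (3*ε) g := split.symm
    _ ≤ _ := Finset.sum_le_sum fun g _ => mono g

end S16
end Prob

open Classical in
theorem stmt16 :
    ∃ C : ℝ, 0 < C ∧ ∀ γ : ℝ, 0 < γ → ∃ n₀ : ℕ, ∀ (n : ℕ) (ε : ℝ),
      n₀ ≤ n → C * Real.logb 2 n / 2 ^ n ≤ ε → ε ≤ 1 / 5 →
      1 - γ ≤ ∑ g : (Fin n → Bool) → Bool,
        (if FarFromJuntas n (n - 1) ε g then 1 else 0) *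
          ∏ x : Fin n → Bool, (if g x then 3 * ε else 1 - 3 * ε) := by
  refine ⟨1, one_pos, ?_⟩
  intro γ hγ
  have h1 : Filter.Tendsto (fun n : ℕ => 300 / Real.logb 2 (n : ℝ)) Filter.atTop (nhds 0) :=
    Filter.Tendsto.div_atTop tendsto_const_nhds
      ((Real.tendsto_logb_atTop (by norm_num : (1:ℝ) < 2)).comp tendsto_natCast_atTop_atTop)
  have h2 : Filter.Tendsto (fun n : ℕ => (n : ℝ) * (1800 / 2 ^ n)) Filter.atTop (nhds 0) := by
    have base := tendsto_self_mul_const_pow_of_lt_one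
      (by norm_num : (0:ℝ) ≤ 1/2) (by norm_num : (1:ℝ)/2 < 1)
    have base2 := base.const_mul (1800 : ℝ)
    rw [mul_zero] at base2
    convert base2 using 2 with n
    rw [div_pow, one_pow]
    ring
  have hsum := h1.add h2
  rw [add_zero] at hsum
  obtain ⟨n₁, hn₁⟩ := Filter.eventually_atTop.1 (hsum.eventually_lt_const hγ)
  refine ⟨max n₁ 2, ?_⟩
  intro n ε hn hε1 hε5
  have hn2 : 2 ≤ n := le_trans (le_max_right _ _) hn
  have hnn1 : n₁ ≤ n := le_trans (le_max_left _ _) hn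
  have hN : (0:ℝ) < 2 ^ n := by positivity
  have hlogb : (1:ℝ) ≤ Real.logb 2 (n : ℝ) := by
    have := Real.logb_le_logb_of_le (by norm_num : (1:ℝ) < 2)
      (by norm_num : (0:ℝ) < 2) (show (2:ℝ) ≤ (n:ℝ) by exact_mod_cast hn2)
    rwa [Real.logb_self_eq_one (by norm_num)] at this
  rw [one_mul] at hε1
  have hεN : Real.logb 2 (n : ℝ) ≤ ε * 2 ^ n := by
    rw [div_le_iff₀ hN] at hε1
    linarith
  have hε0 : 0 < ε := by
    have h0 : (0:ℝ) < Real.logb 2 (n : ℝ) / 2 ^ n := div_pos (by linarith) hN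
    calc (0:ℝ) < Real.logb 2 (n : ℝ) / 2 ^ n := h0
      _ ≤ ε := hε1
  have main := S16.prob_bound n (by omega) ε hε0 hε5
  have hbound : 300 / (ε * 2 ^ n) + (n : ℝ) * (1800 / 2 ^ n) < γ := by
    have hF := hn₁ n hnn1
    have hdiv : 300 / (ε * 2 ^ n) ≤ 300 / Real.logb 2 (n : ℝ) := by
      gcongr
    calc 300 / (ε * 2 ^ n) + (n : ℝ) * (1800 / 2 ^ n)
        ≤ 300 / Real.logb 2 (n : ℝ) + (n : ℝ) * (1800 / 2 ^ n) := by linarith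
      _ < γ := hF
  calc 1 - γ ≤ 1 - (300 / (ε * 2 ^ n) + (n : ℝ) * (1800 / 2 ^ n)) := by linarith
    _ ≤ _ := main
end
end

section
/- For every constant C > 0 and every γ > 0 there is n₀ ∈ ℕ such that for all n ≥ n₀ and all reals ε with 2^{−n} ≤ ε ≤ C·(log₂ n)/2^n such that 2^n·ε is an integer, the following holds: if g is a uniformly random element of the set of Boolean functions on {0,1}^n that take the value 1 on exactly 2^n·ε points, then Pr[g is ε-far from every (n−1)-junta] ≥ 1 − γ. -/
set_option maxHeartbeats 1000000
set_option synthInstance.maxHeartbeats 400000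

open Finset

namespace Stmt17Aux

/-- flip coordinate `i` -/
def flip {n : ℕ} (i : Fin n) (x : Fin n → Bool) : Fin n → Bool :=
  Function.update x i (!(x i))

lemma flip_apply {n : ℕ} (i : Fin n) (x : Fin n → Bool) : flip i x i = !(x i) := by
  simp [flip]

lemma flip_flip {n : ℕ} (i : Fin n) (x : Fin n → Bool) : flip i (flip i x) = x := by
  unfold flip
  rw [Function.update_self, Function.update_idem, Bool.not_not, Function.update_eq_self]

lemma flip_ne {n : ℕ} (i : Fin n) (x : Fin n → Bool) : flip i x ≠ x := by
  intro h
  have := congrFun h i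
  rw [flip_apply] at this
  exact (Bool.not_ne_self _) this

lemma flip_inj {n : ℕ} (i : Fin n) {x y : Fin n → Bool} (h : flip i x = flip i y) : x = y := by
  have := congrArg (flip i) h
  rwa [flip_flip, flip_flip] at this

/-- a function whose support contains an edge of the hypercube -/
def Bad {n : ℕ} (g : (Fin n → Bool) → Bool) : Prop :=
  ∃ x : Fin n → Bool, ∃ i : Fin n, g x = true ∧ g (flip i x) = true

lemma far_of_not_bad {n : ℕ} (hn : 0 < n) (E : ℕ) (ε : ℝ) (hE : (E : ℝ) = 2 ^ n * ε)
    (g : (Fin n → Bool) → Bool)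
    (hcard : (Finset.univ.filter (fun x => g x = true)).card = E)
    (hb : ¬ Bad g) : FarFromJuntas n (n - 1) ε g := by
  classical
  rintro h ⟨S, hS, hJ⟩
  obtain ⟨i, hi⟩ : ∃ i, i ∉ S := by
    by_contra hall
    push_neg at hall
    have hSu : S = Finset.univ := Finset.eq_univ_of_forall hall
    rw [hSu, Finset.card_univ, Fintype.card_fin] at hS
    omega
  have hinv : ∀ x : Fin n → Bool, h (flip i x) = h x := by
    intro x
    refine hJ _ _ (fun j hj => ?_)
    exact Function.update_of_ne (by rintro rfl; exact hi hj) _ _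
  set T := Finset.univ.filter (fun x => g x = true) with hT
  set D := Finset.univ.filter (fun x => g x ≠ h x) with hD
  have key : T.card ≤ D.card := by
    apply Finset.card_le_card_of_injOn (fun x => if h x = false then x else flip i x)
    · intro x hx
      have hgx : g x = true := (Finset.mem_filter.mp hx).2
      by_cases hhx : h x = false
      · simp only [if_pos hhx]
        simp [hD, hgx, hhx]
      · have hhx' : h x = true := by revert hhx; cases h x <;> simp
        have hgf : g (flip i x) = false := by
          by_contra hc
          exact hb ⟨x, i, hgx, by revert hc; cases g (flip i x) <;> simp⟩
        have hhf : h (flip i x) = true := by rw [hinv]; exact hhx'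
        simp only [if_neg hhx]
        simp [hD, hgf, hhf]
    · intro x hx y hy hxy
      by_cases hhx : h x = false <;> by_cases hhy : h y = false
      · simpa [if_pos hhx, if_pos hhy] using hxy
      · exfalso
        simp only [if_pos hhx, if_neg hhy] at hxy
        have hhy' : h y = true := by revert hhy; cases h y <;> simp
        have hx' : h x = true := by rw [hxy, hinv]; exact hhy'
        rw [hx'] at hhx
        simp at hhx
      · exfalso
        simp only [if_neg hhx, if_pos hhy] at hxy
        have hhx' : h x = true := by revert hhx; cases h x <;> simp
        have hy' : h y = true := by rw [← hxy, hinv]; exact hhx'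
        rw [hy'] at hhy
        simp at hhy
      · simp only [if_neg hhx, if_neg hhy] at hxy
        exact flip_inj i hxy
  have hle : (E : ℝ) ≤ (D.card : ℝ) := by
    rw [← hcard]
    exact_mod_cast key
  calc ε * 2 ^ n = (E : ℝ) := by rw [hE]; ring
    _ ≤ _ := hle

lemma card_funs (n k : ℕ) :
    (Finset.univ.filter (fun g : (Fin n → Bool) → Bool =>
      (Finset.univ.filter (fun x => g x = true)).card = k)).card = (2 ^ n).choose k := by
  classical
  have hcard : ((Finset.univ : Finset (Fin n → Bool)).powersetCard k).card = (2 ^ n).choose k := by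
    rw [Finset.card_powersetCard, Finset.card_univ]
    congr 1
    simp [Fintype.card_fun]
  rw [← hcard]
  refine Finset.card_bij' (fun g _ => Finset.univ.filter (fun x => g x = true))
      (fun s _ => (fun x => decide (x ∈ s))) ?_ ?_ ?_ ?_
  · intro g hg
    rw [Finset.mem_powersetCard]
    exact ⟨Finset.subset_univ _, (Finset.mem_filter.mp hg).2⟩
  · intro s hs
    rw [Finset.mem_filter]
    refine ⟨Finset.mem_univ _, ?_⟩
    have hss : Finset.univ.filter (fun x => decide (x ∈ s) = true) = s := by
      ext x; simp
    rw [hss]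
    exact (Finset.mem_powersetCard.mp hs).2
  · intro g hg
    funext x
    by_cases h : g x = true <;> simp [h]
  · intro s hs
    ext x; simp

lemma supp_reduce {n : ℕ} (g : (Fin n → Bool) → Bool) (x : Fin n → Bool) (i : Fin n)
    (hx : g x = true) (hfx : g (flip i x) = true) :
    Finset.univ.filter (fun y =>
        (if y = x ∨ y = flip i x then false else g y) = true)
      = (Finset.univ.filter (fun y => g y = true)) \ {x, flip i x} := by
  classical
  ext y
  by_cases h : y = x ∨ y = flip i x
  · rcases h with rfl | rfl <;> simp [hx, hfx]
  · push_neg at h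
    simp [h.1, h.2]

open Classical in
lemma card_bad_le {n : ℕ} (hn : 0 < n) (E : ℕ) :
    (Finset.univ.filter (fun g : (Fin n → Bool) → Bool =>
      (Finset.univ.filter (fun x => g x = true)).card = E ∧ Bad g)).card
      ≤ 2 ^ n * n * (2 ^ n).choose (E - 2) := by
  classical
  haveI : Nonempty (Fin n) := ⟨⟨0, hn⟩⟩
  set tgt : Finset (((Fin n → Bool) × Fin n) × ((Fin n → Bool) → Bool)) :=
    Finset.univ ×ˢ (Finset.univ.filter (fun g' : (Fin n → Bool) → Bool =>
      (Finset.univ.filter (fun x => g' x = true)).card = E - 2)) with htgt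
  have hct : tgt.card = 2 ^ n * n * (2 ^ n).choose (E - 2) := by
    rw [htgt, Finset.card_product, card_funs, Finset.card_univ]
    simp [Fintype.card_fun]
  rw [← hct]
  set F : ((Fin n → Bool) → Bool) → (((Fin n → Bool) × Fin n) × ((Fin n → Bool) → Bool)) :=
    fun g => if hb : Bad g then
      ((hb.choose, hb.choose_spec.choose),
        fun y => if y = hb.choose ∨ y = flip hb.choose_spec.choose hb.choose then false else g y)
    else (((fun _ => false), ⟨0, hn⟩), fun _ => false) with hF
  set recon : (((Fin n → Bool) × Fin n) × ((Fin n → Bool) → Bool)) → ((Fin n → Bool) → Bool) :=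
    fun p y => if y = p.1.1 ∨ y = flip p.1.2 p.1.1 then true else p.2 y with hrec
  have hre : ∀ g : (Fin n → Bool) → Bool, Bad g → recon (F g) = g := by
    intro g hb
    simp only [hF, hrec, dif_pos hb]
    obtain ⟨hx, hfx⟩ := hb.choose_spec.choose_spec
    funext y
    by_cases h : y = hb.choose ∨ y = flip hb.choose_spec.choose hb.choose
    · simp only [if_pos h]
      rcases h with rfl | rfl
      · exact hx.symm
      · exact hfx.symm
    · simp only [if_neg h]
  apply Finset.card_le_card_of_injOn F
  · intro g hg
    obtain ⟨hcard, hb⟩ := Finset.mem_filter.mp hg |>.2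
    simp only [hF, dif_pos hb]
    obtain ⟨hx, hfx⟩ : g hb.choose = true ∧ g (flip hb.choose_spec.choose hb.choose) = true :=
      hb.choose_spec.choose_spec
    rw [htgt, Finset.mem_coe, Finset.mem_product]
    refine ⟨Finset.mem_univ _, ?_⟩
    rw [Finset.mem_filter]
    refine ⟨Finset.mem_univ _, ?_⟩
    rw [supp_reduce g hb.choose hb.choose_spec.choose hx hfx, Finset.card_sdiff_of_subset]
    · rw [hcard, Finset.card_insert_of_notMem (by simp [Ne.symm (flip_ne _ _)]),
        Finset.card_singleton]
    · intro y hy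
      simp only [Finset.mem_insert, Finset.mem_singleton] at hy
      rcases hy with rfl | rfl
      · simp only [Finset.mem_filter, Finset.mem_univ, true_and]
        exact hx
      · simp only [Finset.mem_filter, Finset.mem_univ, true_and]
        exact hfx
  · intro g1 hg1 g2 hg2 heq
    have hb1 : Bad g1 := (Finset.mem_filter.mp hg1).2.2
    have hb2 : Bad g2 := (Finset.mem_filter.mp hg2).2.2
    rw [← hre g1 hb1, ← hre g2 hb2, heq]

lemma choose_identity (M e : ℕ) :
    (M.choose (e + 2)) * ((e + 2) * (e + 1)) = M.choose e * ((M - e) * (M - e - 1)) := by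
  have i1 : M.choose (e + 1) * (e + 1) = M.choose e * (M - e) := Nat.choose_succ_right_eq M e
  have i2 : M.choose (e + 2) * (e + 2) = M.choose (e + 1) * (M - (e + 1)) :=
    Nat.choose_succ_right_eq M (e + 1)
  have h3 : M - (e + 1) = M - e - 1 := by omega
  calc M.choose (e + 2) * ((e + 2) * (e + 1))
      = (M.choose (e + 2) * (e + 2)) * (e + 1) := by ring
    _ = (M.choose (e + 1) * (M - e - 1)) * (e + 1) := by rw [i2, h3]
    _ = (M.choose (e + 1) * (e + 1)) * (M - e - 1) := by ring
    _ = (M.choose e * (M - e)) * (M - e - 1) := by rw [i1]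
    _ = M.choose e * ((M - e) * (M - e - 1)) := by ring

end Stmt17Aux

open Stmt17Aux in
open Classical in
theorem stmt17 (C : ℝ) (hC : 0 < C) (γ : ℝ) (hγ : 0 < γ) :
    ∃ n₀ : ℕ, ∀ (n E : ℕ) (ε : ℝ),
      n₀ ≤ n → (2 : ℝ) ^ (-(n : ℝ)) ≤ ε → ε ≤ C * Real.logb 2 n / 2 ^ n →
      (E : ℝ) = 2 ^ n * ε →
      (1 - γ) * ((Finset.univ.filter (fun g : (Fin n → Bool) → Bool =>
          (Finset.univ.filter (fun x => g x = true)).card = E)).card : ℝ) ≤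
        ((Finset.univ.filter (fun g : (Fin n → Bool) → Bool =>
          (Finset.univ.filter (fun x => g x = true)).card = E ∧
            FarFromJuntas n (n - 1) ε g)).card : ℝ) := by
  have htend3 : Filter.Tendsto (fun n : ℕ => (n : ℝ) ^ 3 * (1 / 2 : ℝ) ^ n)
      Filter.atTop (nhds 0) :=
    tendsto_pow_const_mul_const_pow_of_lt_one 3 (by norm_num) (by norm_num)
  have htend1 : Filter.Tendsto (fun n : ℕ => (n : ℝ) ^ 1 * (1 / 2 : ℝ) ^ n)
      Filter.atTop (nhds 0) :=
    tendsto_pow_const_mul_const_pow_of_lt_one 1 (by norm_num) (by norm_num)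
  have hK : (0 : ℝ) < γ / (4 * C ^ 2) := by positivity
  have hK1 : (0 : ℝ) < 1 / (2 * C) := by positivity
  have hev3 : ∀ᶠ n : ℕ in Filter.atTop, (n : ℝ) ^ 3 * (1 / 2 : ℝ) ^ n < γ / (4 * C ^ 2) :=
    htend3.eventually (gt_mem_nhds hK)
  have hev1 : ∀ᶠ n : ℕ in Filter.atTop, (n : ℝ) ^ 1 * (1 / 2 : ℝ) ^ n < 1 / (2 * C) :=
    htend1.eventually (gt_mem_nhds hK1)
  have hev0 : ∀ᶠ n : ℕ in Filter.atTop, 1 ≤ n := Filter.eventually_ge_atTop 1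
  obtain ⟨n₀, hn₀⟩ := Filter.eventually_atTop.mp ((hev3.and hev1).and hev0)
  refine ⟨n₀, ?_⟩
  intro n E ε hn hε1 hε2 hE
  obtain ⟨⟨hv3, hv1⟩, hv0⟩ := hn₀ n hn
  have hnpos : 0 < n := hv0
  have hm0 : (0 : ℝ) < 2 ^ n := by positivity
  have hhalf : ((1 : ℝ) / 2) ^ n = (2 ^ n)⁻¹ := by rw [div_pow, one_pow, one_div]
  -- `4 C² n³ ≤ γ 2^n`
  have hbig : 4 * C ^ 2 * (n : ℝ) ^ 3 ≤ γ * 2 ^ n := by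
    rw [hhalf, mul_inv_lt_iff₀ hm0] at hv3
    have h4 : (0 : ℝ) < 4 * C ^ 2 := by positivity
    have h5 := mul_lt_mul_of_pos_left hv3 h4
    have heq : 4 * C ^ 2 * (γ / (4 * C ^ 2) * 2 ^ n) = γ * 2 ^ n := by
      field_simp
    rw [heq] at h5
    nlinarith [h5]
  -- `2 C n ≤ 2^n`
  have h2Cn : 2 * C * (n : ℝ) ≤ 2 ^ n := by
    rw [hhalf, pow_one, mul_inv_lt_iff₀ hm0] at hv1
    have h4 : (0 : ℝ) < 2 * C := by positivity
    have h5 := mul_lt_mul_of_pos_left hv1 h4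
    have heq : 2 * C * (1 / (2 * C) * 2 ^ n) = 2 ^ n := by field_simp
    rw [heq] at h5
    nlinarith [h5]
  have hεpos : 0 < ε := lt_of_lt_of_le (by positivity) hε1
  have hE1 : (1 : ℝ) ≤ (E : ℝ) := by
    rw [hE]
    have hrp : (2 : ℝ) ^ (-(n : ℝ)) = ((2 : ℝ) ^ n)⁻¹ := by
      rw [Real.rpow_neg (by norm_num), Real.rpow_natCast]
    calc (1 : ℝ) = 2 ^ n * (2 ^ n)⁻¹ := by field_simp
      _ ≤ 2 ^ n * ε := by
          apply mul_le_mul_of_nonneg_left _ (le_of_lt hm0)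
          rw [← hrp]; exact hε1
  have hlogb : Real.logb 2 n ≤ (n : ℝ) := by
    rcases Nat.eq_or_lt_of_le hv0 with h | h
    · rw [← h]; norm_num
    · rw [Real.logb_le_iff_le_rpow (by norm_num) (by exact_mod_cast hnpos)]
      rw [Real.rpow_natCast]
      exact_mod_cast (Nat.lt_two_pow_self (n := n)).le
  have hEC : (E : ℝ) ≤ C * (n : ℝ) := by
    rw [hE]
    calc (2 : ℝ) ^ n * ε ≤ 2 ^ n * (C * Real.logb 2 n / 2 ^ n) :=
          mul_le_mul_of_nonneg_left hε2 (le_of_lt hm0)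
      _ = C * Real.logb 2 n := by field_simp
      _ ≤ C * n := mul_le_mul_of_nonneg_left hlogb (le_of_lt hC)
  have hEm2 : 2 * (E : ℝ) ≤ 2 ^ n := by nlinarith
  have hEM : E ≤ 2 ^ n := by
    have h6 : (E : ℝ) ≤ ((2 ^ n : ℕ) : ℝ) := by push_cast; nlinarith
    exact_mod_cast h6
  classical
  have hBγN : ((Finset.univ.filter (fun g : (Fin n → Bool) → Bool =>
      (Finset.univ.filter (fun x => g x = true)).card = E ∧ Bad g)).card : ℝ)
      ≤ γ * ((Finset.univ.filter (fun g : (Fin n → Bool) → Bool =>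
      (Finset.univ.filter (fun x => g x = true)).card = E)).card : ℝ) := by
    rcases le_or_gt 2 E with hE2 | hE2
    · obtain ⟨e, rfl⟩ : ∃ e, E = e + 2 := ⟨E - 2, by omega⟩
      have hNcast : ((Finset.univ.filter (fun g : (Fin n → Bool) → Bool =>
          (Finset.univ.filter (fun x => g x = true)).card = e + 2)).card : ℝ)
          = ((2 ^ n).choose (e + 2) : ℝ) := by
        exact_mod_cast congrArg (fun m : ℕ => (m : ℝ)) (card_funs n (e + 2))
      rw [hNcast]
      have hBle := card_bad_le hnpos (e + 2)
      have hsimp : (e + 2) - 2 = e := by simp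
      rw [hsimp] at hBle
      have hid := choose_identity (2 ^ n) e
      have heM : e + 2 ≤ 2 ^ n := by
        have h6 : ((e : ℝ) + 2) ≤ ((2 ^ n : ℕ) : ℝ) := by push_cast at hEm2 ⊢; nlinarith
        exact_mod_cast h6
      have heM0 : e ≤ 2 ^ n := le_trans (Nat.le_add_right e 2) heM
      have heM1 : e + 1 ≤ 2 ^ n :=
        le_trans (Nat.add_le_add_left one_le_two e) heM
      have h1 : ((2 ^ n - e : ℕ) : ℝ) = ((2 ^ n : ℕ) : ℝ) - (e : ℝ) :=
        Nat.cast_sub heM0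
      have h2 : ((2 ^ n - e - 1 : ℕ) : ℝ) = ((2 ^ n : ℕ) : ℝ) - (e : ℝ) - 1 := by
        have h7 : (2 ^ n - e - 1 : ℕ) = 2 ^ n - (e + 1) := (Nat.sub_sub _ _ _)
        rw [h7, Nat.cast_sub heM1]
        push_cast
        ring
      have hidR : ((2 ^ n).choose (e + 2) : ℝ) * (((e : ℝ) + 2) * ((e : ℝ) + 1))
          = ((2 ^ n).choose e : ℝ)
            * ((((2 ^ n : ℕ) : ℝ) - (e : ℝ)) * (((2 ^ n : ℕ) : ℝ) - (e : ℝ) - 1)) := by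
        calc ((2 ^ n).choose (e + 2) : ℝ) * (((e : ℝ) + 2) * ((e : ℝ) + 1))
            = (((2 ^ n).choose (e + 2) * ((e + 2) * (e + 1)) : ℕ) : ℝ) := by push_cast; ring
          _ = (((2 ^ n).choose e * ((2 ^ n - e) * (2 ^ n - e - 1)) : ℕ) : ℝ) := by rw [hid]
          _ = _ := by rw [Nat.cast_mul, Nat.cast_mul, h1, h2]
      have hscal : (((2 ^ n : ℕ) : ℝ)) * (n : ℝ) * (((e : ℝ) + 2) * ((e : ℝ) + 1))
          ≤ γ * ((((2 ^ n : ℕ) : ℝ) - (e : ℝ)) * (((2 ^ n : ℕ) : ℝ) - (e : ℝ) - 1)) := by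
        have hm : (((2 ^ n : ℕ) : ℝ)) = 2 ^ n := by push_cast; ring
        rw [hm]
        have he2 : (e : ℝ) + 2 = ((e + 2 : ℕ) : ℝ) := by push_cast; ring
        have hcn0 : (0 : ℝ) ≤ C * n := by positivity
        have hEhalf : ((e : ℝ) + 2) ≤ 2 ^ n / 2 := by
          push_cast at hEm2; linarith
        have hge1 : 2 ^ n / 2 ≤ (2 : ℝ) ^ n - (e : ℝ) - 1 := by linarith
        have hge2 : 2 ^ n / 2 ≤ (2 : ℝ) ^ n - (e : ℝ) := by linarith
        have hb1 : (e : ℝ) + 2 ≤ C * n := by rw [he2]; exact hEC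
        have hb2 : (e : ℝ) + 1 ≤ C * n := by linarith
        have hlhs : ((2 : ℝ) ^ n) * (n : ℝ) * (((e : ℝ) + 2) * ((e : ℝ) + 1))
            ≤ 2 ^ n * (n : ℝ) * ((C * n) * (C * n)) := by
          have hp1 : (0 : ℝ) ≤ (e : ℝ) + 1 := by positivity
          have hp2 : (0 : ℝ) ≤ (e : ℝ) + 2 := by positivity
          have hmm := mul_le_mul hb1 hb2 hp1 hcn0
          have hnn : (0 : ℝ) ≤ 2 ^ n * (n : ℝ) := by positivity
          nlinarith
        have hrhs : γ * (2 ^ n / 2 * (2 ^ n / 2))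
            ≤ γ * (((2 : ℝ) ^ n - (e : ℝ)) * ((2 : ℝ) ^ n - (e : ℝ) - 1)) := by
          apply mul_le_mul_of_nonneg_left _ (le_of_lt hγ)
          have h0 : (0 : ℝ) ≤ 2 ^ n / 2 := by positivity
          exact mul_le_mul hge2 hge1 h0 (by linarith)
        have hmid : 2 ^ n * (n : ℝ) * ((C * n) * (C * n)) ≤ γ * (2 ^ n / 2 * (2 ^ n / 2)) := by
          have e1 : 2 ^ n * (n : ℝ) * ((C * n) * (C * n))
              = (4 * C ^ 2 * (n : ℝ) ^ 3) * (2 ^ n / 4) := by ring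
          have e2 : γ * ((2 : ℝ) ^ n / 2 * (2 ^ n / 2)) = (γ * 2 ^ n) * (2 ^ n / 4) := by ring
          rw [e1, e2]
          exact mul_le_mul_of_nonneg_right hbig (by positivity)
        linarith
      have hpos : (0 : ℝ) < ((e : ℝ) + 2) * ((e : ℝ) + 1) := by positivity
      have hBleR : ((Finset.univ.filter (fun g : (Fin n → Bool) → Bool =>
          (Finset.univ.filter (fun x => g x = true)).card = e + 2 ∧ Bad g)).card : ℝ)
          ≤ (((2 ^ n : ℕ) : ℝ)) * (n : ℝ) * ((2 ^ n).choose e : ℝ) := by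
        have h9 := hBle
        have h9' : ((Finset.univ.filter (fun g : (Fin n → Bool) → Bool =>
            (Finset.univ.filter (fun x => g x = true)).card = e + 2 ∧ Bad g)).card : ℝ)
            ≤ ((2 ^ n * n * (2 ^ n).choose e : ℕ) : ℝ) := by exact_mod_cast h9
        push_cast at h9' ⊢
        linarith
      have hfinal := calc ((Finset.univ.filter (fun g : (Fin n → Bool) → Bool =>
            (Finset.univ.filter (fun x => g x = true)).card = e + 2 ∧ Bad g)).card : ℝ)
            * (((e : ℝ) + 2) * ((e : ℝ) + 1))
          ≤ ((((2 ^ n : ℕ) : ℝ)) * (n : ℝ) * ((2 ^ n).choose e : ℝ))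
              * (((e : ℝ) + 2) * ((e : ℝ) + 1)) :=
            mul_le_mul_of_nonneg_right hBleR (le_of_lt hpos)
        _ = ((2 ^ n).choose e : ℝ)
              * ((((2 ^ n : ℕ) : ℝ)) * (n : ℝ) * (((e : ℝ) + 2) * ((e : ℝ) + 1))) := by ring
        _ ≤ ((2 ^ n).choose e : ℝ)
              * (γ * ((((2 ^ n : ℕ) : ℝ) - (e : ℝ)) * (((2 ^ n : ℕ) : ℝ) - (e : ℝ) - 1))) :=
            mul_le_mul_of_nonneg_left hscal (by positivity)
        _ = γ * (((2 ^ n).choose e : ℝ)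
              * ((((2 ^ n : ℕ) : ℝ) - (e : ℝ)) * (((2 ^ n : ℕ) : ℝ) - (e : ℝ) - 1))) := by ring
        _ = γ * (((2 ^ n).choose (e + 2) : ℝ) * (((e : ℝ) + 2) * ((e : ℝ) + 1))) := by rw [hidR]
      have hr : γ * (((2 ^ n).choose (e + 2) : ℝ) * (((e : ℝ) + 2) * ((e : ℝ) + 1)))
          = γ * ((2 ^ n).choose (e + 2) : ℝ) * (((e : ℝ) + 2) * ((e : ℝ) + 1)) := by ring
      refine le_of_mul_le_mul_right ?_ hpos
      linarith [hfinal, hr]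
    · have hBzero : (Finset.univ.filter (fun g : (Fin n → Bool) → Bool =>
          (Finset.univ.filter (fun x => g x = true)).card = E ∧ Bad g)).card = 0 := by
        rw [Finset.card_eq_zero, Finset.filter_eq_empty_iff]
        rintro g _ ⟨hcard, x, i, hx, hfx⟩
        have hsub : ({x, flip i x} : Finset (Fin n → Bool)) ⊆
            Finset.univ.filter (fun y => g y = true) := by
          intro y hy
          simp only [Finset.mem_insert, Finset.mem_singleton] at hy
          rcases hy with rfl | rfl
          · simp only [Finset.mem_filter, Finset.mem_univ, true_and]; exact hx
          · simp only [Finset.mem_filter, Finset.mem_univ, true_and]; exact hfx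
        have hc2 : ({x, flip i x} : Finset (Fin n → Bool)).card = 2 := by
          rw [Finset.card_insert_of_notMem (by simp [Ne.symm (flip_ne i x)]),
            Finset.card_singleton]
        have hcc := Finset.card_le_card hsub
        rw [hc2, hcard] at hcc
        omega
      rw [hBzero]
      push_cast
      positivity
  set N := (Finset.univ.filter (fun g : (Fin n → Bool) → Bool =>
      (Finset.univ.filter (fun x => g x = true)).card = E)).card with hN
  set B := (Finset.univ.filter (fun g : (Fin n → Bool) → Bool =>
      (Finset.univ.filter (fun x => g x = true)).card = E ∧ Bad g)).card with hB
  set G := (Finset.univ.filter (fun g : (Fin n → Bool) → Bool =>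
      (Finset.univ.filter (fun x => g x = true)).card = E ∧ ¬ Bad g)).card with hG
  set D := (Finset.univ.filter (fun g : (Fin n → Bool) → Bool =>
      (Finset.univ.filter (fun x => g x = true)).card = E ∧
        FarFromJuntas n (n - 1) ε g)).card with hDdef
  have hsplit : B + G = N := by
    have h11 := Finset.card_filter_add_card_filter_not
      (s := (Finset.univ.filter (fun g : (Fin n → Bool) → Bool =>
        (Finset.univ.filter (fun x => g x = true)).card = E))) (p := Bad)
    rw [Finset.filter_filter, Finset.filter_filter] at h11
    rw [hB, hG, hN]
    convert h11 using 3
  have hGD : G ≤ D := by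
    apply Finset.card_le_card
    intro g hg
    rw [Finset.mem_filter] at hg ⊢
    exact ⟨hg.1, hg.2.1, far_of_not_bad hnpos E ε hE g hg.2.1 hg.2.2⟩
  have hGN : (G : ℝ) = (N : ℝ) - (B : ℝ) := by
    have h10 := congrArg (fun x : ℕ => (x : ℝ)) hsplit
    push_cast at h10
    linarith
  have hDN : (G : ℝ) ≤ (D : ℝ) := by exact_mod_cast hGD
  calc (1 - γ) * (N : ℝ) = (N : ℝ) - γ * N := by ring
    _ ≤ (N : ℝ) - (B : ℝ) := by linarith
    _ = (G : ℝ) := hGN.symm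
    _ ≤ (D : ℝ) := hDN
end
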